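/- Let n ≥ 2, let Γ'(z', t) = (4πt)^{-(n-1)/2} e^{-|z'|²/(4t)} be the (n-1)-dimensional heat kernel, and let D_{x_n}N(z', x_n) = c_n x_n (|z'|² + x_n²)^{-n/2} (with c_n = 1/(nω_n), n ≥ 3). Let x' ∈ ℝ^{n-1} with |x'| ≥ 1, 0 < x_n < 1/2, t > 0. Then there exist constants c > 1 and δ ∈ (0, 1/4] such that c^{-1} t^{-(n-1)/2} e^{-|x'|²/t} ≤ ∫_{|z'| ≤ |x'|/10} Γ'(x'-z', t) D_{x_n} N(z', x_n) dz' ≤ c t^{-(n-1)/2} e^{-δ |x'|²/t}. -/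

import Mathlib

open Real MeasureTheory Metric

lemma aux_g_integrable (d : ℕ) :
    Integrable (fun w : EuclideanSpace ℝ (Fin d) => (‖w‖ ^ 2 + 1) ^ (-((d : ℝ) + 1) / 2)) := by
  have h := integrable_rpow_neg_one_add_norm_sq
      (μ := (volume : Measure (EuclideanSpace ℝ (Fin d)))) (r := (d : ℝ) + 1)
      (by rw [finrank_euclideanSpace_fin]; exact lt_add_one _)
  simpa [add_comm, neg_div] using h

lemma aux_q_cont (d : ℕ) (p xn : ℝ) (hx : 0 < xn) :
    Continuous (fun z : EuclideanSpace ℝ (Fin d) => (‖z‖ ^ 2 + xn ^ 2) ^ (-p / 2)) := by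
  apply Continuous.rpow_const (by continuity)
  intro z
  exact Or.inl (by positivity)

lemma aux_scale (d : ℕ) {xn : ℝ} (hx : 0 < xn) (r : ℝ) :
    ∫ z in closedBall (0 : EuclideanSpace ℝ (Fin d)) r,
        xn * (‖z‖ ^ 2 + xn ^ 2) ^ (-((d : ℝ) + 1) / 2)
      = ∫ w in closedBall (0 : EuclideanSpace ℝ (Fin d)) (r / xn),
        (‖w‖ ^ 2 + 1) ^ (-((d : ℝ) + 1) / 2) := by
  set p : ℝ := (d : ℝ) + 1 with hp
  set h : EuclideanSpace ℝ (Fin d) → ℝ := fun z => xn * (‖z‖ ^ 2 + xn ^ 2) ^ (-p / 2) with hh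
  set g : EuclideanSpace ℝ (Fin d) → ℝ := fun w => (‖w‖ ^ 2 + 1) ^ (-p / 2) with hg
  have hxnd : (0:ℝ) < xn ^ (-(d : ℝ)) := Real.rpow_pos_of_pos hx _
  have key : ∀ w : EuclideanSpace ℝ (Fin d),
      (closedBall (0 : EuclideanSpace ℝ (Fin d)) r).indicator h (xn • w)
        = xn ^ (-(d : ℝ)) *
          (closedBall (0 : EuclideanSpace ℝ (Fin d)) (r / xn)).indicator g w := by
    intro w
    have hmem : (xn • w ∈ closedBall (0 : EuclideanSpace ℝ (Fin d)) r)
        ↔ w ∈ closedBall (0 : EuclideanSpace ℝ (Fin d)) (r / xn) := by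
      simp only [mem_closedBall, dist_zero_right, norm_smul, Real.norm_eq_abs,
        abs_of_pos hx]
      rw [le_div_iff₀ hx, mul_comm]
    have hcomp : h (xn • w) = xn ^ (-(d : ℝ)) * g w := by
      have h1 : ‖xn • w‖ ^ 2 + xn ^ 2 = xn ^ 2 * (‖w‖ ^ 2 + 1) := by
        rw [norm_smul, Real.norm_eq_abs, mul_pow, sq_abs]; ring
      have h2 : (xn ^ 2 * (‖w‖ ^ 2 + 1)) ^ (-p / 2)
          = (xn ^ 2) ^ (-p / 2) * (‖w‖ ^ 2 + 1) ^ (-p / 2) :=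
        Real.mul_rpow (sq_nonneg _) (by positivity)
      have h3 : (xn ^ 2 : ℝ) ^ (-p / 2) = xn ^ (-p) := by
        rw [← Real.rpow_natCast xn 2, ← Real.rpow_mul hx.le]
        congr 1
        push_cast; ring
      have h4 : xn * xn ^ (-p) = xn ^ (-(d : ℝ)) := by
        rw [show xn * xn ^ (-p) = xn ^ (1:ℝ) * xn ^ (-p) by rw [Real.rpow_one],
          ← Real.rpow_add hx]
        congr 1
        rw [hp]; ring
      show xn * (‖xn • w‖ ^ 2 + xn ^ 2) ^ (-p / 2) = xn ^ (-(d:ℝ)) * (‖w‖ ^ 2 + 1) ^ (-p / 2)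
      rw [h1, h2, h3, ← mul_assoc, h4]
    classical
    rw [Set.indicator_apply, Set.indicator_apply]
    by_cases hw : w ∈ closedBall (0 : EuclideanSpace ℝ (Fin d)) (r / xn)
    · rw [if_pos hw, if_pos (hmem.mpr hw), hcomp]
    · rw [if_neg hw, if_neg (fun hc => hw (hmem.mp hc)), mul_zero]
  have hsmul := MeasureTheory.Measure.integral_comp_smul
      (volume : Measure (EuclideanSpace ℝ (Fin d)))
      ((closedBall (0 : EuclideanSpace ℝ (Fin d)) r).indicator h) xn
  rw [finrank_euclideanSpace_fin] at hsmul
  have habs : |((xn ^ d : ℝ))⁻¹| = xn ^ (-(d : ℝ)) := by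
    rw [abs_of_pos (by positivity), ← Real.rpow_natCast xn d, ← Real.rpow_neg hx.le]
  simp only [key, habs, smul_eq_mul] at hsmul
  rw [integral_const_mul] at hsmul
  have h5 : ∫ w, (closedBall (0 : EuclideanSpace ℝ (Fin d)) (r / xn)).indicator g w
      = ∫ w in closedBall (0 : EuclideanSpace ℝ (Fin d)) (r / xn), g w :=
    integral_indicator measurableSet_closedBall
  have h6 : ∫ z, (closedBall (0 : EuclideanSpace ℝ (Fin d)) r).indicator h z
      = ∫ z in closedBall (0 : EuclideanSpace ℝ (Fin d)) r, h z :=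
    integral_indicator measurableSet_closedBall
  rw [h5, h6] at hsmul
  exact (mul_left_cancel₀ (ne_of_gt hxnd) hsmul).symm

lemma aux_lower (d : ℕ) (xn r : ℝ) (hx : 0 < xn) (hx2 : xn < 1/2) (hr : 1/10 ≤ r) :
    (2:ℝ) ^ (-((d:ℝ)+1)/2) *
        (volume (closedBall (0 : EuclideanSpace ℝ (Fin d)) (1/5 : ℝ))).toReal
      ≤ ∫ z in closedBall (0 : EuclideanSpace ℝ (Fin d)) r,
          xn * (‖z‖ ^ 2 + xn ^ 2) ^ (-((d:ℝ)+1)/2) := by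
  rw [aux_scale d hx r]
  have h15 : (1/5 : ℝ) ≤ r / xn := by
    rw [le_div_iff₀ hx]; nlinarith
  have hpneg : (-((d:ℝ)+1)/2) ≤ 0 := by
    have : (0:ℝ) ≤ (d:ℝ) + 1 := by positivity
    linarith
  calc (2:ℝ) ^ (-((d:ℝ)+1)/2) *
        (volume (closedBall (0 : EuclideanSpace ℝ (Fin d)) (1/5 : ℝ))).toReal
      = ∫ _w in closedBall (0 : EuclideanSpace ℝ (Fin d)) (1/5 : ℝ),
          (2:ℝ) ^ (-((d:ℝ)+1)/2) := by
        rw [setIntegral_const, smul_eq_mul, mul_comm]; rfl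
    _ ≤ ∫ w in closedBall (0 : EuclideanSpace ℝ (Fin d)) (1/5 : ℝ),
          (‖w‖ ^ 2 + 1) ^ (-((d:ℝ)+1)/2) := by
        apply setIntegral_mono_on (integrableOn_const measure_closedBall_lt_top.ne)
          ((aux_g_integrable d).integrableOn) measurableSet_closedBall
        intro w hw
        rw [mem_closedBall, dist_zero_right] at hw
        apply Real.rpow_le_rpow_of_nonpos (by positivity) _ hpneg
        nlinarith [norm_nonneg w]
    _ ≤ ∫ w in closedBall (0 : EuclideanSpace ℝ (Fin d)) (r / xn),
          (‖w‖ ^ 2 + 1) ^ (-((d:ℝ)+1)/2) :=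
        setIntegral_mono_set (aux_g_integrable d).integrableOn
          (Filter.Eventually.of_forall fun w => by positivity)
          (HasSubset.Subset.eventuallyLE (closedBall_subset_closedBall h15))

lemma aux_upper (d : ℕ) (xn : ℝ) (hx : 0 < xn) (r : ℝ) :
    ∫ z in closedBall (0 : EuclideanSpace ℝ (Fin d)) r,
        xn * (‖z‖ ^ 2 + xn ^ 2) ^ (-((d:ℝ)+1)/2)
      ≤ ∫ w : EuclideanSpace ℝ (Fin d), (‖w‖ ^ 2 + 1) ^ (-((d:ℝ)+1)/2) := by
  rw [aux_scale d hx r]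
  exact setIntegral_le_integral (aux_g_integrable d)
    (Filter.Eventually.of_forall fun w => by positivity)


lemma aux_mainU (d : ℕ) (κ t xn : ℝ) (x' : EuclideanSpace ℝ (Fin d)) (hκ : 0 ≤ κ)
    (hx1 : 1 ≤ ‖x'‖) (ht : 0 < t) (hxn : 0 < xn) (hxn2 : xn < 1/2) :
    (∫ z' in {z' : EuclideanSpace ℝ (Fin d) | ‖z'‖ ≤ ‖x'‖ / 10},
        (4 * Real.pi * t) ^ (-(d:ℝ)/2) * Real.exp (-‖x' - z'‖ ^ 2 / (4*t)) *
          (κ * xn * (‖z'‖ ^ 2 + xn ^ 2) ^ (-((d:ℝ)+1)/2)))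
      ≤ ((4*Real.pi) ^ (-(d:ℝ)/2) * κ *
          (∫ w : EuclideanSpace ℝ (Fin d), (‖w‖ ^ 2 + 1) ^ (-((d:ℝ)+1)/2))) *
        (t ^ (-(d:ℝ)/2) * Real.exp (-(1/5) * ‖x'‖ ^ 2 / t)) := by
  have hSeq : {z' : EuclideanSpace ℝ (Fin d) | ‖z'‖ ≤ ‖x'‖ / 10}
      = closedBall (0 : EuclideanSpace ℝ (Fin d)) (‖x'‖/10) := by
    ext z; simp [dist_zero_right]
  rw [hSeq]
  have hΓ : (4*Real.pi*t) ^ (-(d:ℝ)/2) = (4*Real.pi) ^ (-(d:ℝ)/2) * t ^ (-(d:ℝ)/2) :=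
    Real.mul_rpow (by positivity) ht.le
  have hΓnn : (0:ℝ) ≤ (4*Real.pi*t) ^ (-(d:ℝ)/2) := Real.rpow_nonneg (by positivity) _
  have hrpowc := aux_q_cont d ((d:ℝ)+1) xn hxn
  have hexpc : Continuous (fun z : EuclideanSpace ℝ (Fin d) =>
      Real.exp (-‖x' - z‖ ^ 2 / (4*t))) := by fun_prop
  have hfc : Continuous (fun z' : EuclideanSpace ℝ (Fin d) =>
      (4 * Real.pi * t) ^ (-(d:ℝ)/2) * Real.exp (-‖x' - z'‖ ^ 2 / (4*t)) *
        (κ * xn * (‖z'‖ ^ 2 + xn ^ 2) ^ (-((d:ℝ)+1)/2))) :=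
    (continuous_const.mul hexpc).mul (continuous_const.mul hrpowc)
  have hgc : Continuous (fun z' : EuclideanSpace ℝ (Fin d) =>
      (4 * Real.pi * t) ^ (-(d:ℝ)/2) * Real.exp (-(1/5) * ‖x'‖ ^ 2 / t) *
        (κ * xn * (‖z'‖ ^ 2 + xn ^ 2) ^ (-((d:ℝ)+1)/2))) :=
    continuous_const.mul (continuous_const.mul hrpowc)
  have step1 : (∫ z' in closedBall (0 : EuclideanSpace ℝ (Fin d)) (‖x'‖/10),
        (4 * Real.pi * t) ^ (-(d:ℝ)/2) * Real.exp (-‖x' - z'‖ ^ 2 / (4*t)) *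
          (κ * xn * (‖z'‖ ^ 2 + xn ^ 2) ^ (-((d:ℝ)+1)/2)))
      ≤ ∫ z' in closedBall (0 : EuclideanSpace ℝ (Fin d)) (‖x'‖/10),
        (4 * Real.pi * t) ^ (-(d:ℝ)/2) * Real.exp (-(1/5) * ‖x'‖ ^ 2 / t) *
          (κ * xn * (‖z'‖ ^ 2 + xn ^ 2) ^ (-((d:ℝ)+1)/2)) := by
    apply setIntegral_mono_on (hfc.continuousOn.integrableOn_compact (isCompact_closedBall _ _))
      (hgc.continuousOn.integrableOn_compact (isCompact_closedBall _ _))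
      measurableSet_closedBall
    intro z hz
    rw [mem_closedBall, dist_zero_right] at hz
    have hexp : Real.exp (-‖x' - z‖ ^ 2 / (4*t)) ≤ Real.exp (-(1/5) * ‖x'‖ ^ 2 / t) := by
      apply Real.exp_le_exp.mpr
      rw [div_le_div_iff₀ (by positivity) ht]
      have h1 : ‖x'‖ - ‖z‖ ≤ ‖x' - z‖ := norm_sub_norm_le _ _
      have h2 : (9/10) * ‖x'‖ ≤ ‖x' - z‖ := by linarith
      have h3 : (81/100) * ‖x'‖ ^ 2 ≤ ‖x' - z‖ ^ 2 := by nlinarith [norm_nonneg x']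
      nlinarith [mul_le_mul_of_nonneg_right h3 ht.le]
    exact mul_le_mul_of_nonneg_right (mul_le_mul_of_nonneg_left hexp hΓnn)
      (mul_nonneg (mul_nonneg hκ hxn.le) (Real.rpow_nonneg (by positivity) _))
  have step2 : (∫ z' in closedBall (0 : EuclideanSpace ℝ (Fin d)) (‖x'‖/10),
        (4 * Real.pi * t) ^ (-(d:ℝ)/2) * Real.exp (-(1/5) * ‖x'‖ ^ 2 / t) *
          (κ * xn * (‖z'‖ ^ 2 + xn ^ 2) ^ (-((d:ℝ)+1)/2)))
      = ((4 * Real.pi * t) ^ (-(d:ℝ)/2) * Real.exp (-(1/5) * ‖x'‖ ^ 2 / t) * κ) *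
        ∫ z' in closedBall (0 : EuclideanSpace ℝ (Fin d)) (‖x'‖/10),
          xn * (‖z'‖ ^ 2 + xn ^ 2) ^ (-((d:ℝ)+1)/2) := by
    rw [← integral_const_mul]
    congr 1
    funext z
    ring
  refine le_trans step1 ?_
  calc ∫ z' in closedBall (0 : EuclideanSpace ℝ (Fin d)) (‖x'‖/10),
        (4 * Real.pi * t) ^ (-(d:ℝ)/2) * Real.exp (-(1/5) * ‖x'‖ ^ 2 / t) *
          (κ * xn * (‖z'‖ ^ 2 + xn ^ 2) ^ (-((d:ℝ)+1)/2))
      = ((4 * Real.pi * t) ^ (-(d:ℝ)/2) * Real.exp (-(1/5) * ‖x'‖ ^ 2 / t) * κ) *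
        ∫ z' in closedBall (0 : EuclideanSpace ℝ (Fin d)) (‖x'‖/10),
          xn * (‖z'‖ ^ 2 + xn ^ 2) ^ (-((d:ℝ)+1)/2) := step2
    _ ≤ ((4 * Real.pi * t) ^ (-(d:ℝ)/2) * Real.exp (-(1/5) * ‖x'‖ ^ 2 / t) * κ) *
        ∫ w : EuclideanSpace ℝ (Fin d), (‖w‖ ^ 2 + 1) ^ (-((d:ℝ)+1)/2) :=
        mul_le_mul_of_nonneg_left (aux_upper d xn hxn (‖x'‖/10))
          (mul_nonneg (mul_nonneg hΓnn (Real.exp_nonneg _)) hκ)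
    _ = ((4*Real.pi) ^ (-(d:ℝ)/2) * κ *
          (∫ w : EuclideanSpace ℝ (Fin d), (‖w‖ ^ 2 + 1) ^ (-((d:ℝ)+1)/2))) *
        (t ^ (-(d:ℝ)/2) * Real.exp (-(1/5) * ‖x'‖ ^ 2 / t)) := by rw [hΓ]; ring

lemma aux_mainL (d : ℕ) (κ t xn : ℝ) (x' : EuclideanSpace ℝ (Fin d)) (hκ : 0 ≤ κ)
    (hx1 : 1 ≤ ‖x'‖) (ht : 0 < t) (hxn : 0 < xn) (hxn2 : xn < 1/2) :
    ((4*Real.pi) ^ (-(d:ℝ)/2) * κ *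
        ((2:ℝ) ^ (-((d:ℝ)+1)/2) *
          (volume (closedBall (0 : EuclideanSpace ℝ (Fin d)) (1/5 : ℝ))).toReal)) *
      (t ^ (-(d:ℝ)/2) * Real.exp (-‖x'‖ ^ 2 / t))
      ≤ ∫ z' in {z' : EuclideanSpace ℝ (Fin d) | ‖z'‖ ≤ ‖x'‖ / 10},
          (4 * Real.pi * t) ^ (-(d:ℝ)/2) * Real.exp (-‖x' - z'‖ ^ 2 / (4*t)) *
            (κ * xn * (‖z'‖ ^ 2 + xn ^ 2) ^ (-((d:ℝ)+1)/2)) := by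
  have hSeq : {z' : EuclideanSpace ℝ (Fin d) | ‖z'‖ ≤ ‖x'‖ / 10}
      = closedBall (0 : EuclideanSpace ℝ (Fin d)) (‖x'‖/10) := by
    ext z; simp [dist_zero_right]
  rw [hSeq]
  have hΓ : (4*Real.pi*t) ^ (-(d:ℝ)/2) = (4*Real.pi) ^ (-(d:ℝ)/2) * t ^ (-(d:ℝ)/2) :=
    Real.mul_rpow (by positivity) ht.le
  have hΓnn : (0:ℝ) ≤ (4*Real.pi*t) ^ (-(d:ℝ)/2) := Real.rpow_nonneg (by positivity) _
  have hrpowc := aux_q_cont d ((d:ℝ)+1) xn hxn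
  have hexpc : Continuous (fun z : EuclideanSpace ℝ (Fin d) =>
      Real.exp (-‖x' - z‖ ^ 2 / (4*t))) := by fun_prop
  have hfc : Continuous (fun z' : EuclideanSpace ℝ (Fin d) =>
      (4 * Real.pi * t) ^ (-(d:ℝ)/2) * Real.exp (-‖x' - z'‖ ^ 2 / (4*t)) *
        (κ * xn * (‖z'‖ ^ 2 + xn ^ 2) ^ (-((d:ℝ)+1)/2))) :=
    (continuous_const.mul hexpc).mul (continuous_const.mul hrpowc)
  have hgc : Continuous (fun z' : EuclideanSpace ℝ (Fin d) =>
      (4 * Real.pi * t) ^ (-(d:ℝ)/2) * Real.exp (-‖x'‖ ^ 2 / t) *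
        (κ * xn * (‖z'‖ ^ 2 + xn ^ 2) ^ (-((d:ℝ)+1)/2))) :=
    continuous_const.mul (continuous_const.mul hrpowc)
  have step1 : (∫ z' in closedBall (0 : EuclideanSpace ℝ (Fin d)) (‖x'‖/10),
        (4 * Real.pi * t) ^ (-(d:ℝ)/2) * Real.exp (-‖x'‖ ^ 2 / t) *
          (κ * xn * (‖z'‖ ^ 2 + xn ^ 2) ^ (-((d:ℝ)+1)/2)))
      ≤ ∫ z' in closedBall (0 : EuclideanSpace ℝ (Fin d)) (‖x'‖/10),
        (4 * Real.pi * t) ^ (-(d:ℝ)/2) * Real.exp (-‖x' - z'‖ ^ 2 / (4*t)) *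
          (κ * xn * (‖z'‖ ^ 2 + xn ^ 2) ^ (-((d:ℝ)+1)/2)) := by
    apply setIntegral_mono_on (hgc.continuousOn.integrableOn_compact (isCompact_closedBall _ _))
      (hfc.continuousOn.integrableOn_compact (isCompact_closedBall _ _))
      measurableSet_closedBall
    intro z hz
    rw [mem_closedBall, dist_zero_right] at hz
    have hexp : Real.exp (-‖x'‖ ^ 2 / t) ≤ Real.exp (-‖x' - z‖ ^ 2 / (4*t)) := by
      apply Real.exp_le_exp.mpr
      rw [div_le_div_iff₀ ht (by positivity)]
      have h1 : ‖x' - z‖ ≤ ‖x'‖ + ‖z‖ := norm_sub_le _ _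
      nlinarith [norm_nonneg (x' - z), norm_nonneg z, norm_nonneg x', ht.le,
        mul_le_mul_of_nonneg_right (show ‖x' - z‖ ^ 2 ≤ 4 * ‖x'‖ ^ 2 by
          nlinarith [norm_nonneg (x' - z), norm_nonneg z, norm_nonneg x']) ht.le]
    exact mul_le_mul_of_nonneg_right (mul_le_mul_of_nonneg_left hexp hΓnn)
      (mul_nonneg (mul_nonneg hκ hxn.le) (Real.rpow_nonneg (by positivity) _))
  have step2 : (∫ z' in closedBall (0 : EuclideanSpace ℝ (Fin d)) (‖x'‖/10),
        (4 * Real.pi * t) ^ (-(d:ℝ)/2) * Real.exp (-‖x'‖ ^ 2 / t) *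
          (κ * xn * (‖z'‖ ^ 2 + xn ^ 2) ^ (-((d:ℝ)+1)/2)))
      = ((4 * Real.pi * t) ^ (-(d:ℝ)/2) * Real.exp (-‖x'‖ ^ 2 / t) * κ) *
        ∫ z' in closedBall (0 : EuclideanSpace ℝ (Fin d)) (‖x'‖/10),
          xn * (‖z'‖ ^ 2 + xn ^ 2) ^ (-((d:ℝ)+1)/2) := by
    rw [← integral_const_mul]
    congr 1
    funext z
    ring
  calc ((4*Real.pi) ^ (-(d:ℝ)/2) * κ *
        ((2:ℝ) ^ (-((d:ℝ)+1)/2) *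
          (volume (closedBall (0 : EuclideanSpace ℝ (Fin d)) (1/5 : ℝ))).toReal)) *
      (t ^ (-(d:ℝ)/2) * Real.exp (-‖x'‖ ^ 2 / t))
      = ((4 * Real.pi * t) ^ (-(d:ℝ)/2) * Real.exp (-‖x'‖ ^ 2 / t) * κ) *
        ((2:ℝ) ^ (-((d:ℝ)+1)/2) *
          (volume (closedBall (0 : EuclideanSpace ℝ (Fin d)) (1/5 : ℝ))).toReal) := by
        rw [hΓ]; ring
    _ ≤ ((4 * Real.pi * t) ^ (-(d:ℝ)/2) * Real.exp (-‖x'‖ ^ 2 / t) * κ) *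
        ∫ z' in closedBall (0 : EuclideanSpace ℝ (Fin d)) (‖x'‖/10),
          xn * (‖z'‖ ^ 2 + xn ^ 2) ^ (-((d:ℝ)+1)/2) :=
        mul_le_mul_of_nonneg_left
          (aux_lower d xn (‖x'‖/10) hxn hxn2 (by linarith [hx1]))
          (mul_nonneg (mul_nonneg hΓnn (Real.exp_nonneg _)) hκ)
    _ = _ := step2.symm
    _ ≤ _ := step1

theorem stmt_18 (n : ℕ) (hn : 2 ≤ n) :
    ∃ c δ : ℝ, 1 < c ∧ 0 < δ ∧ δ ≤ 1/4 ∧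
      ∀ (x' : EuclideanSpace ℝ (Fin (n - 1))) (t xn : ℝ),
        1 ≤ ‖x'‖ → 0 < t → 0 < xn → xn < 1/2 →
        c⁻¹ * (t ^ (-((n : ℝ) - 1) / 2) * Real.exp (-‖x'‖ ^ 2 / t)) ≤
          (∫ z' in {z' : EuclideanSpace ℝ (Fin (n - 1)) | ‖z'‖ ≤ ‖x'‖ / 10},
            (4 * Real.pi * t) ^ (-((n : ℝ) - 1) / 2) *
                Real.exp (-‖x' - z'‖ ^ 2 / (4 * t)) *
              ((1 / ((n : ℝ) * (volume (Metric.ball (0 : EuclideanSpace ℝ (Fin n)) 1)).toReal)) *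
                xn * (‖z'‖ ^ 2 + xn ^ 2) ^ (-(n : ℝ) / 2))) ∧
        (∫ z' in {z' : EuclideanSpace ℝ (Fin (n - 1)) | ‖z'‖ ≤ ‖x'‖ / 10},
            (4 * Real.pi * t) ^ (-((n : ℝ) - 1) / 2) *
                Real.exp (-‖x' - z'‖ ^ 2 / (4 * t)) *
              ((1 / ((n : ℝ) * (volume (Metric.ball (0 : EuclideanSpace ℝ (Fin n)) 1)).toReal)) *
                xn * (‖z'‖ ^ 2 + xn ^ 2) ^ (-(n : ℝ) / 2))) ≤
          c * (t ^ (-((n : ℝ) - 1) / 2) * Real.exp (-δ * ‖x'‖ ^ 2 / t)) := by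
  obtain ⟨d, rfl⟩ : ∃ d, n = d + 1 := ⟨n - 1, by omega⟩
  simp only [Nat.add_sub_cancel, Nat.cast_add, Nat.cast_one, add_sub_cancel_right]
  have hω : (0:ℝ) < (volume (Metric.ball (0 : EuclideanSpace ℝ (Fin (d+1))) 1)).toReal :=
    ENNReal.toReal_pos (measure_ball_pos volume _ one_pos).ne' measure_ball_lt_top.ne
  set κ : ℝ := 1 / (((d:ℝ) + 1) *
      (volume (Metric.ball (0 : EuclideanSpace ℝ (Fin (d+1))) 1)).toReal) with hκdef
  have hκ : 0 < κ := by
    rw [hκdef]; exact one_div_pos.mpr (mul_pos (by positivity) hω)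
  set M : ℝ := ∫ w : EuclideanSpace ℝ (Fin d), (‖w‖ ^ 2 + 1) ^ (-((d:ℝ)+1)/2) with hMdef
  set m : ℝ := (2:ℝ) ^ (-((d:ℝ)+1)/2) *
      (volume (closedBall (0 : EuclideanSpace ℝ (Fin d)) (1/5:ℝ))).toReal with hmdef
  have hm : 0 < m := mul_pos (Real.rpow_pos_of_pos two_pos _)
    (ENNReal.toReal_pos (measure_closedBall_pos volume _ (by norm_num)).ne'
      measure_closedBall_lt_top.ne)
  have hmM : m ≤ M := le_trans
    (aux_lower d (1/4) (1/10) (by norm_num) (by norm_num) le_rfl)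
    (aux_upper d (1/4) (by norm_num) (1/10))
  have hM : 0 < M := lt_of_lt_of_le hm hmM
  set A : ℝ := (4 * Real.pi) ^ (-(d:ℝ)/2) with hAdef
  have hA : 0 < A := Real.rpow_pos_of_pos (by positivity) _
  have hAκm : 0 < A*κ*m := mul_pos (mul_pos hA hκ) hm
  refine ⟨max (A*κ*M + (A*κ*m)⁻¹) 2, 1/5, lt_of_lt_of_le one_lt_two (le_max_right _ _),
    by norm_num, by norm_num, ?_⟩
  intro x' t xn hx1 ht hxn hxn2
  have hcU : A*κ*M ≤ max (A*κ*M + (A*κ*m)⁻¹) 2 :=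
    le_trans (le_add_of_nonneg_right (inv_nonneg.mpr hAκm.le)) (le_max_left _ _)
  have hcL : (max (A*κ*M + (A*κ*m)⁻¹) 2)⁻¹ ≤ A*κ*m := by
    have h1 : (A*κ*m)⁻¹ ≤ max (A*κ*M + (A*κ*m)⁻¹) 2 :=
      le_trans (le_add_of_nonneg_left (mul_nonneg (mul_nonneg hA.le hκ.le) hM.le))
        (le_max_left _ _)
    have h2 := inv_anti₀ (inv_pos.mpr hAκm) h1
    rwa [inv_inv] at h2
  constructor
  · refine le_trans ?_ (aux_mainL d κ t xn x' hκ.le hx1 ht hxn hxn2)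
    have hX : (0:ℝ) ≤ t ^ (-(d:ℝ)/2) * Real.exp (-‖x'‖ ^ 2 / t) :=
      mul_nonneg (Real.rpow_nonneg ht.le _) (Real.exp_nonneg _)
    exact mul_le_mul_of_nonneg_right hcL hX
  · refine le_trans (aux_mainU d κ t xn x' hκ.le hx1 ht hxn hxn2) ?_
    have hX : (0:ℝ) ≤ t ^ (-(d:ℝ)/2) * Real.exp (-(1/5) * ‖x'‖ ^ 2 / t) :=
      mul_nonneg (Real.rpow_nonneg ht.le _) (Real.exp_nonneg _)
    exact mul_le_mul_of_nonneg_right hcU hX
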